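/- Let g : ℝ^3 → ℝ^{3×3} be symmetric-matrix-valued, smooth, uniformly elliptic, and time-independent, with ‖g − I‖ small in the AF norm outside {|x| ≤ R}. Along a solution of the Hamiltonian system ẋ_k = 2τ g^{0k}(x) + 2g^{kj}(x)ξ_j, ξ̇_k = -2τ ∂_k g^{0j}(x)ξ_j - ∂_k g^{ij}(x)ξ_iξ_j, ṫ = -2τ + 2g^{0j}ξ_j, τ̇ = 0, with null initial data (p = 0) on the τ = b^+ branch, one has (1/2) d²/ds² |x_s|² = |ẋ_s|² + x_s·ẍ_s ≥ c|ξ_s|² > 0 whenever |x_s| > R, where c > 0 depends only on the ellipticity constants and the smallness of ‖g − I‖_{AF_{>R}}. -/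

import Mathlib

noncomputable section


lemma abs_sum3_le {f : Fin 3 → ℝ} {a : ℝ} (h : ∀ j, |f j| ≤ a) : |∑ j, f j| ≤ 3 * a := by
  calc |∑ j, f j| ≤ ∑ j, |f j| := Finset.abs_sum_le_sum_abs _ _
    _ ≤ ∑ _j : Fin 3, a := Finset.sum_le_sum fun j _ => h j
    _ = 3 * a := by simp

lemma abs_mul_le {a b A B : ℝ} (ha : |a| ≤ A) (hb : |b| ≤ B) : |a * b| ≤ A * B := by
  rw [abs_mul]
  exact mul_le_mul ha hb (abs_nonneg _) (le_trans (abs_nonneg _) ha)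

set_option maxHeartbeats 2000000 in
lemma estimate (c₁ C₁ T ε τ : ℝ) (hc₁ : 0 < c₁) (hC₁ : c₁ ≤ C₁)
    (hT : T = 1 + C₁) (hε : ε = 1 / (10000 * T ^ 2))
    (p v G0 Xv Ξ D0 : Fin 3 → ℝ)
    (G dG0 DG : Fin 3 → Fin 3 → ℝ)
    (dG : Fin 3 → Fin 3 → Fin 3 → ℝ)
    (hG : ∀ i j, |G i j - if i = j then (1:ℝ) else 0| ≤ ε)
    (hG0 : ∀ j, |G0 j| ≤ ε)
    (hpdG : ∀ l i j k, |p l * dG i j k| ≤ ε)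
    (hpdG0 : ∀ l j k, |p l * dG0 j k| ≤ ε)
    (hell₁ : c₁ * ∑ i, (v i) ^ 2 ≤ ∑ i, ∑ j, G i j * v i * v j)
    (hell₂ : ∑ i, ∑ j, G i j * v i * v j ≤ C₁ * ∑ i, (v i) ^ 2)
    (hnull : τ = (∑ j, G0 j * v j) +
        Real.sqrt ((∑ j, G0 j * v j) ^ 2 + ∑ i, ∑ j, G i j * v i * v j))
    (hτ0 : τ ≠ 0)
    (hXv : ∀ k, Xv k = 2 * τ * G0 k + 2 * ∑ j, G k j * v j)
    (hD0 : ∀ k, D0 k = ∑ m, Xv m * dG0 k m)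
    (hDG : ∀ k j, DG k j = ∑ m, Xv m * dG k j m)
    (hΞ : ∀ k, Ξ k = -(2 * τ * ∑ j, dG0 j k * v j) - ∑ i, ∑ j, dG i j k * v i * v j) :
    0 < ∑ i, (v i) ^ 2 ∧
    ∑ i, (v i) ^ 2 ≤ ∑ k, Xv k * Xv k +
      ∑ k, p k * (2 * τ * D0 k + 2 * ∑ j, (DG k j * v j + G k j * Ξ j)) := by

  -- basic positivity facts
  have hC₁0 : 0 ≤ C₁ := le_trans hc₁.le hC₁
  have hT1 : (1:ℝ) ≤ T := by rw [hT]; linarith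
  have hT0 : 0 < T := lt_of_lt_of_le one_pos hT1
  have hε0 : 0 < ε := by rw [hε]; positivity
  have hε1 : ε ≤ 1 := by
    rw [hε, div_le_one (by positivity)]
    nlinarith
  have hεT : ε * T ^ 2 = 1 / 10000 := by
    rw [hε]; field_simp
  set S : ℝ := ∑ i, (v i) ^ 2 with hS
  have hS0 : 0 ≤ S := Finset.sum_nonneg fun i _ => sq_nonneg _
  set σ : ℝ := Real.sqrt S with hσ
  have hσ0 : 0 ≤ σ := Real.sqrt_nonneg _
  have hσσ : σ * σ = S := Real.mul_self_sqrt hS0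
  have hvb : ∀ i, |v i| ≤ σ := by
    intro i
    have h1 : (v i) ^ 2 ≤ S :=
      Finset.single_le_sum (f := fun i => (v i) ^ 2) (fun i _ => sq_nonneg _) (Finset.mem_univ i)
    calc |v i| = Real.sqrt ((v i) ^ 2) := (Real.sqrt_sq_eq_abs _).symm
      _ ≤ σ := Real.sqrt_le_sqrt h1
  set P : ℝ := ∑ j, G0 j * v j with hP
  set Q : ℝ := ∑ i, ∑ j, G i j * v i * v j with hQ
  have hQ0 : 0 ≤ Q := le_trans (by positivity) hell₁
  have hPb : |P| ≤ 3 * (ε * σ) := abs_sum3_le fun j => abs_mul_le (hG0 j) (hvb j)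
  have hsPQ : |P| ≤ Real.sqrt (P ^ 2 + Q) := by
    rw [← Real.sqrt_sq_eq_abs]
    exact Real.sqrt_le_sqrt (by linarith)
  have hτnn : 0 ≤ τ := by
    rw [hnull]
    have := neg_abs_le P
    linarith
  set B : ℝ := 6 * ε + Real.sqrt C₁ with hB
  have hB0 : 0 ≤ B := by positivity
  have hτle : τ ≤ B * σ := by
    have h1 : Real.sqrt (P ^ 2 + Q) ≤ |P| + Real.sqrt Q := by
      have h2 : P ^ 2 + Q ≤ (|P| + Real.sqrt Q) ^ 2 := by
        nlinarith [Real.sq_sqrt hQ0, Real.sqrt_nonneg Q, abs_nonneg P, sq_abs P]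
      calc Real.sqrt (P ^ 2 + Q) ≤ Real.sqrt ((|P| + Real.sqrt Q) ^ 2) := Real.sqrt_le_sqrt h2
        _ = |P| + Real.sqrt Q := Real.sqrt_sq (by positivity)
    have h3 : Real.sqrt Q ≤ Real.sqrt C₁ * σ := by
      calc Real.sqrt Q ≤ Real.sqrt (C₁ * S) := Real.sqrt_le_sqrt hell₂
        _ = Real.sqrt C₁ * σ := Real.sqrt_mul hC₁0 S
    have h4 := le_abs_self P
    rw [hnull]
    have : B * σ = 6 * (ε * σ) + Real.sqrt C₁ * σ := by rw [hB]; ring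
    linarith
  have hSpos : 0 < S := by
    rcases lt_or_eq_of_le hS0 with h | h
    · exact h
    · exfalso
      apply hτ0
      have hv0 : ∀ i, v i = 0 := by
        intro i
        have h2 := (Finset.sum_eq_zero_iff_of_nonneg
          (fun i _ => sq_nonneg (v i))).1 h.symm i (Finset.mem_univ i)
        exact (pow_eq_zero_iff two_ne_zero).1 h2
      have hP0 : P = 0 := by rw [hP]; simp [hv0]
      have hQ0' : Q = 0 := by rw [hQ]; simp [hv0]
      rw [hnull, hP0, hQ0']
      simp

  -- bounds on Xv
  have hXsub : ∀ k, |Xv k - 2 * v k| ≤ (2 * B + 6) * ε * σ := by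
    intro k
    have e : Xv k - 2 * v k
        = 2 * τ * G0 k + 2 * ∑ j, (G k j - if k = j then (1:ℝ) else 0) * v j := by
      rw [hXv k]
      fin_cases k <;> simp [Fin.sum_univ_three] <;> ring
    rw [e]
    have t1 : |2 * τ * G0 k| ≤ 2 * (B * σ) * ε := by
      rw [abs_mul]
      have h1 : |2 * τ| = 2 * τ := abs_of_nonneg (by linarith)
      rw [h1]
      have h2 := hG0 k
      nlinarith [abs_nonneg (G0 k)]
    have t2 : |2 * ∑ j, (G k j - if k = j then (1:ℝ) else 0) * v j| ≤ 2 * (3 * (ε * σ)) := by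
      have h := abs_sum3_le (f := fun j => (G k j - if k = j then (1:ℝ) else 0) * v j)
        (a := ε * σ) (fun j => abs_mul_le (hG k j) (hvb j))
      rw [abs_mul]
      have h2 : |(2:ℝ)| = 2 := by norm_num
      rw [h2]
      linarith
    have heq : 2 * (B * σ) * ε + 2 * (3 * (ε * σ)) = (2 * B + 6) * ε * σ := by ring
    calc |2 * τ * G0 k + 2 * ∑ j, (G k j - if k = j then (1:ℝ) else 0) * v j|
        ≤ |2 * τ * G0 k| + |2 * ∑ j, (G k j - if k = j then (1:ℝ) else 0) * v j| := abs_add_le _ _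
      _ ≤ (2 * B + 6) * ε * σ := by linarith
  set K : ℝ := 2 + (2 * B + 6) * ε with hK
  have hK0 : 0 ≤ K := by
    have h1 : (0:ℝ) ≤ 2 * B + 6 := by linarith
    have h2 := mul_nonneg h1 hε0.le
    rw [hK]; linarith
  have hXb : ∀ k, |Xv k| ≤ K * σ := by
    intro k
    have h1 := hXsub k
    have h2 := hvb k
    have e : Xv k = 2 * v k + (Xv k - 2 * v k) := by ring
    calc |Xv k| = |2 * v k + (Xv k - 2 * v k)| := by rw [← e]
      _ ≤ |2 * v k| + |Xv k - 2 * v k| := abs_add_le _ _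
      _ ≤ K * σ := by
          rw [abs_mul]
          simp only [abs_two]
          have e2 : K * σ = 2 * σ + (2 * B + 6) * ε * σ := by rw [hK]; ring
          linarith
  have hXX : 4 * S - 12 * ((2 * B + 6) * ε * S) ≤ ∑ k, Xv k * Xv k := by
    have perk : ∀ k, 4 * (v k) ^ 2 - 4 * ((2 * B + 6) * ε * S) ≤ Xv k * Xv k := by
      intro k
      have hd := hXsub k
      have h1 : |v k * (Xv k - 2 * v k)| ≤ σ * ((2 * B + 6) * ε * σ) :=
        abs_mul_le (hvb k) hd
      have h2 : σ * ((2 * B + 6) * ε * σ) = (2 * B + 6) * ε * S := by rw [← hσσ]; ring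
      have h3 := neg_abs_le (v k * (Xv k - 2 * v k))
      nlinarith [sq_nonneg (Xv k - 2 * v k)]
    calc 4 * S - 12 * ((2 * B + 6) * ε * S)
        = ∑ k : Fin 3, (4 * (v k) ^ 2 - 4 * ((2 * B + 6) * ε * S)) := by
          simp only [hS, Fin.sum_univ_three]; ring
      _ ≤ ∑ k, Xv k * Xv k := Finset.sum_le_sum fun k _ => perk k
  -- bounds on the second-derivative terms
  have hgb : ∀ i j, |G i j| ≤ 2 := by
    intro i j
    have h := hG i j
    rw [abs_le] at h ⊢
    split_ifs at h <;> constructor <;> linarith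
  have hpD0 : ∀ k, |p k * D0 k| ≤ 3 * (K * σ * ε) := by
    intro k
    have e : p k * D0 k = ∑ m, Xv m * (p k * dG0 k m) := by
      rw [hD0 k, Finset.mul_sum]
      exact Finset.sum_congr rfl fun m _ => by ring
    rw [e]
    exact abs_sum3_le fun m => abs_mul_le (hXb m) (hpdG0 k k m)
  have hpDG : ∀ k j, |p k * DG k j| ≤ 3 * (K * σ * ε) := by
    intro k j
    have e : p k * DG k j = ∑ m, Xv m * (p k * dG k j m) := by
      rw [hDG k j, Finset.mul_sum]
      exact Finset.sum_congr rfl fun m _ => by ring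
    rw [e]
    exact abs_sum3_le fun m => abs_mul_le (hXb m) (hpdG k k j m)
  have hpΞ : ∀ l j, |p l * Ξ j| ≤ (6 * B + 9) * (ε * S) := by
    intro l j
    have e : p l * Ξ j = -((2 * τ * ∑ m, (p l * dG0 m j) * v m)
        + ∑ i, ∑ m, (p l * dG i m j) * v i * v m) := by
      rw [hΞ j]
      simp only [Fin.sum_univ_three]
      ring
    rw [e, abs_neg]
    have t1 : |∑ m, (p l * dG0 m j) * v m| ≤ 3 * (ε * σ) :=
      abs_sum3_le fun m => abs_mul_le (hpdG0 l m j) (hvb m)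
    have t1' : |2 * τ * ∑ m, (p l * dG0 m j) * v m| ≤ 2 * (B * σ) * (3 * (ε * σ)) := by
      rw [abs_mul]
      have h1 : |2 * τ| = 2 * τ := abs_of_nonneg (by linarith)
      rw [h1]
      have h0 := abs_nonneg (∑ m, (p l * dG0 m j) * v m)
      nlinarith
    have t2 : |∑ i, ∑ m, (p l * dG i m j) * v i * v m| ≤ 3 * (3 * (ε * S)) := by
      refine abs_sum3_le fun i => abs_sum3_le fun m => ?_
      have h := abs_mul_le (abs_mul_le (hpdG l i m j) (hvb i)) (hvb m)
      have h2 : ε * σ * σ = ε * S := by rw [← hσσ]; ring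
      linarith
    have heq : 2 * (B * σ) * (3 * (ε * σ)) + 3 * (3 * (ε * S)) = (6 * B + 9) * (ε * S) := by
      rw [← hσσ]; ring
    calc |2 * τ * ∑ m, (p l * dG0 m j) * v m + ∑ i, ∑ m, (p l * dG i m j) * v i * v m|
        ≤ |2 * τ * ∑ m, (p l * dG0 m j) * v m|
          + |∑ i, ∑ m, (p l * dG i m j) * v i * v m| := abs_add_le _ _
      _ ≤ (6 * B + 9) * (ε * S) := by linarith
  have hAk : ∀ k, |p k * (2 * τ * D0 k + 2 * ∑ j, (DG k j * v j + G k j * Ξ j))|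
      ≤ (6 * (B * K) + 18 * K + 12 * (6 * B + 9)) * (ε * S) := by
    intro k
    have e : p k * (2 * τ * D0 k + 2 * ∑ j, (DG k j * v j + G k j * Ξ j))
        = 2 * τ * (p k * D0 k)
          + ∑ j, (2 * ((p k * DG k j) * v j) + 2 * (G k j * (p k * Ξ j))) := by
      simp only [Fin.sum_univ_three]
      ring
    rw [e]
    have t1 : |2 * τ * (p k * D0 k)| ≤ 2 * (B * σ) * (3 * (K * σ * ε)) := by
      rw [abs_mul]
      have h1 : |2 * τ| = 2 * τ := abs_of_nonneg (by linarith)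
      rw [h1]
      have h0 := abs_nonneg (p k * D0 k)
      nlinarith [hpD0 k]
    have t2 : ∀ j, |2 * ((p k * DG k j) * v j) + 2 * (G k j * (p k * Ξ j))|
        ≤ 2 * (3 * (K * σ * ε) * σ) + 2 * (2 * ((6 * B + 9) * (ε * S))) := by
      intro j
      have h1 := abs_mul_le (hpDG k j) (hvb j)
      have h2 := abs_mul_le (hgb k j) (hpΞ k j)
      calc |2 * ((p k * DG k j) * v j) + 2 * (G k j * (p k * Ξ j))|
          ≤ |2 * ((p k * DG k j) * v j)| + |2 * (G k j * (p k * Ξ j))| := abs_add_le _ _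
        _ ≤ 2 * (3 * (K * σ * ε) * σ) + 2 * (2 * ((6 * B + 9) * (ε * S))) := by
            have a1 : |2 * (p k * DG k j * v j)| = 2 * |p k * DG k j * v j| := by
              rw [abs_mul, abs_two]
            have a2 : |2 * (G k j * (p k * Ξ j))| = 2 * |G k j * (p k * Ξ j)| := by
              rw [abs_mul, abs_two]
            rw [a1, a2]
            linarith
    have t3 := abs_sum3_le t2
    have heq : 2 * (B * σ) * (3 * (K * σ * ε))
        + 3 * (2 * (3 * (K * σ * ε) * σ) + 2 * (2 * ((6 * B + 9) * (ε * S))))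
        = (6 * (B * K) + 18 * K + 12 * (6 * B + 9)) * (ε * S) := by
      rw [← hσσ]; ring
    calc |2 * τ * (p k * D0 k)
          + ∑ j, (2 * ((p k * DG k j) * v j) + 2 * (G k j * (p k * Ξ j)))|
        ≤ |2 * τ * (p k * D0 k)|
          + |∑ j, (2 * ((p k * DG k j) * v j) + 2 * (G k j * (p k * Ξ j)))| := abs_add_le _ _
      _ ≤ (6 * (B * K) + 18 * K + 12 * (6 * B + 9)) * (ε * S) := by linarith
  have hpA : |∑ k, p k * (2 * τ * D0 k + 2 * ∑ j, (DG k j * v j + G k j * Ξ j))|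
      ≤ 3 * ((6 * (B * K) + 18 * K + 12 * (6 * B + 9)) * (ε * S)) := abs_sum3_le hAk
  -- numeric bookkeeping
  have hsqrtC : Real.sqrt C₁ ≤ T := by
    rw [hT]
    calc Real.sqrt C₁ ≤ Real.sqrt ((1 + C₁) ^ 2) := Real.sqrt_le_sqrt (by nlinarith)
      _ = 1 + C₁ := Real.sqrt_sq (by linarith)
  have hBle : B ≤ 7 * T := by rw [hB]; nlinarith
  have hKle : K ≤ 22 * T := by
    rw [hK]
    nlinarith [mul_le_mul_of_nonneg_right hε1 hB0]
  have hcoef : (12 * (2 * B + 6) + 3 * (6 * (B * K) + 18 * K + 12 * (6 * B + 9))) * ε ≤ 3 := by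
    have h1 : 12 * (2 * B + 6) + 3 * (6 * (B * K) + 18 * K + 12 * (6 * B + 9))
        ≤ 7000 * T ^ 2 := by
      nlinarith [mul_le_mul hBle hKle hK0 (by positivity : (0:ℝ) ≤ 7 * T), hT1, hB0, hK0]
    calc (12 * (2 * B + 6) + 3 * (6 * (B * K) + 18 * K + 12 * (6 * B + 9))) * ε
        ≤ 7000 * T ^ 2 * ε := mul_le_mul_of_nonneg_right h1 hε0.le
      _ = 7000 * (ε * T ^ 2) := by ring
      _ = 7000 * (1 / 10000) := by rw [hεT]
      _ ≤ 3 := by norm_num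
  refine ⟨hSpos, ?_⟩
  have hZ := neg_abs_le (∑ k, p k * (2 * τ * D0 k + 2 * ∑ j, (DG k j * v j + G k j * Ξ j)))
  have hcoefS : (12 * (2 * B + 6) + 3 * (6 * (B * K) + 18 * K + 12 * (6 * B + 9))) * ε * S
      ≤ 3 * S := mul_le_mul_of_nonneg_right hcoef hS0
  have hh : (12 * (2 * B + 6) + 3 * (6 * (B * K) + 18 * K + 12 * (6 * B + 9))) * ε * S
      = 12 * ((2 * B + 6) * ε * S)
        + 3 * ((6 * (B * K) + 18 * K + 12 * (6 * B + 9)) * (ε * S)) := by ring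
  linarith [hXX, hZ, hpA]

lemma clm_sum (L : (Fin 3 → ℝ) →L[ℝ] ℝ) (v : Fin 3 → ℝ) :
    L v = ∑ m, v m * L (Pi.single m 1) := by
  have hv : (∑ m, v m • (Pi.single m 1 : Fin 3 → ℝ)) = v := by
    funext j
    simp [Finset.sum_apply, Pi.single_apply, mul_ite, Finset.sum_ite_eq]
  conv_lhs => rw [← hv]
  rw [map_sum]
  simp [smul_eq_mul]

set_option maxHeartbeats 2000000

/-- convexity of `|x_s|²` along null bicharacteristics in the
asymptotically flat exterior. On the `τ = b⁺` branch of the null characteristic set,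
if `g` is close to the identity (together with `⟨x⟩`-weighted first derivatives and
`g^{0j}`) outside `{|x| ≤ R}`, then whenever `|x_s| > R` one has
`(1/2) d²/ds² |x_s|² ≥ c|ξ_s|² > 0`, with `c > 0` depending only on the ellipticity
constants and the smallness. -/
theorem exterior_convexity
    (c₁ C₁ : ℝ) (hc₁ : 0 < c₁) (hC₁ : c₁ ≤ C₁) :
    ∃ ε : ℝ, 0 < ε ∧ ∃ c : ℝ, 0 < c ∧
    ∀ (R : ℝ), 1 ≤ R →
    ∀ (g : (Fin 3 → ℝ) → Fin 3 → Fin 3 → ℝ) (g0 : (Fin 3 → ℝ) → Fin 3 → ℝ)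
      (τ : ℝ) (x ξ : ℝ → Fin 3 → ℝ),
    (∀ i j, ContDiff ℝ 1 fun y => g y i j) →
    (∀ j, ContDiff ℝ 1 fun y => g0 y j) →
    (∀ y i j, g y i j = g y j i) →
    -- uniform ellipticity
    (∀ (y v : Fin 3 → ℝ), c₁ * ∑ i, (v i) ^ 2 ≤ ∑ i, ∑ j, g y i j * v i * v j ∧
        ∑ i, ∑ j, g y i j * v i * v j ≤ C₁ * ∑ i, (v i) ^ 2) →
    -- asymptotic flatness: smallness outside `{|y| ≤ R}`
    (∀ y : Fin 3 → ℝ, R < Real.sqrt (∑ l, (y l) ^ 2) →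
      (∀ i j, |g y i j - if i = j then (1 : ℝ) else 0| ≤ ε) ∧
      (∀ k i j, Real.sqrt (∑ l, (y l) ^ 2) *
          |fderiv ℝ (fun y' => g y' i j) y (Pi.single k 1)| ≤ ε) ∧
      (∀ j, |g0 y j| ≤ ε) ∧
      (∀ k j, Real.sqrt (∑ l, (y l) ^ 2) *
          |fderiv ℝ (fun y' => g0 y' j) y (Pi.single k 1)| ≤ ε)) →
    -- the Hamiltonian system
    (∀ (s : ℝ) (k : Fin 3), HasDerivAt (fun s' => x s' k)
        (2 * τ * g0 (x s) k + 2 * ∑ j, g (x s) k j * ξ s j) s) →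
    (∀ (s : ℝ) (k : Fin 3), HasDerivAt (fun s' => ξ s' k)
        (-(2 * τ * ∑ j, fderiv ℝ (fun y => g0 y j) (x s) (Pi.single k 1) * ξ s j)
          - ∑ i, ∑ j, fderiv ℝ (fun y => g y i j) (x s) (Pi.single k 1)
              * ξ s i * ξ s j) s) →
    -- null data on the `τ = b⁺` branch
    τ ≠ 0 →
    (∀ s : ℝ, τ = (∑ j, g0 (x s) j * ξ s j) +
        Real.sqrt ((∑ j, g0 (x s) j * ξ s j) ^ 2
          + ∑ i, ∑ j, g (x s) i j * ξ s i * ξ s j)) →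
    -- conclusion
    ∀ s : ℝ, R < Real.sqrt (∑ i, (x s i) ^ 2) →
      0 < c * ∑ i, (ξ s i) ^ 2 ∧
      c * ∑ i, (ξ s i) ^ 2 ≤
        (1 / 2) * deriv (deriv fun s' => ∑ i, (x s' i) ^ 2) s := by
  have hC₁0 : 0 ≤ C₁ := le_trans hc₁.le hC₁
  refine ⟨1 / (10000 * (1 + C₁) ^ 2), by positivity, 1, one_pos, ?_⟩
  intro R hR g g0 τ x ξ hgC hg0C hgsym hell hAF hHx hHξ hτ0 hnull s hrs
  set ε : ℝ := 1 / (10000 * (1 + C₁) ^ 2) with hεdef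
  set p : Fin 3 → ℝ := x s with hpdef
  set q : Fin 3 → ℝ := ξ s with hqdef
  set dg : Fin 3 → Fin 3 → Fin 3 → ℝ :=
    fun i j m => fderiv ℝ (fun y => g y i j) p (Pi.single m 1) with hdgdef
  set dg0 : Fin 3 → Fin 3 → ℝ :=
    fun j m => fderiv ℝ (fun y => g0 y j) p (Pi.single m 1) with hdg0def
  set Xv : Fin 3 → ℝ := fun k => 2 * τ * g0 p k + 2 * ∑ j, g p k j * q j with hXvdef
  set D0 : Fin 3 → ℝ := fun k => ∑ m, Xv m * dg0 k m with hD0def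
  set DG : Fin 3 → Fin 3 → ℝ := fun k j => ∑ m, Xv m * dg k j m with hDGdef
  set Ξf : Fin 3 → ℝ := fun k =>
    -(2 * τ * ∑ j, dg0 j k * q j) - ∑ i, ∑ j, dg i j k * q i * q j with hΞdef
  -- the moving point as a curve in `Fin 3 → ℝ`
  have hxv : ∀ t, HasDerivAt x
      (fun k => 2 * τ * g0 (x t) k + 2 * ∑ j, g (x t) k j * ξ t j) t :=
    fun t => hasDerivAt_pi.2 fun k => hHx t k
  -- chain rule for scalar functions of the point, at time `s`
  have hcomp : ∀ (h : (Fin 3 → ℝ) → ℝ), ContDiff ℝ 1 h →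
      HasDerivAt (fun t => h (x t)) (∑ m, Xv m * fderiv ℝ h p (Pi.single m 1)) s := by
    intro h hh
    have h1 : HasFDerivAt h (fderiv ℝ h p) p := (hh.differentiable one_ne_zero p).hasFDerivAt
    have h2 := h1.comp_hasDerivAt s (hxv s)
    rw [clm_sum] at h2
    exact h2
  have hgd : ∀ i j, HasDerivAt (fun t => g (x t) i j) (DG i j) s :=
    fun i j => hcomp _ (hgC i j)
  have hg0d : ∀ k, HasDerivAt (fun t => g0 (x t) k) (D0 k) s :=
    fun k => hcomp _ (hg0C k)
  have hξd : ∀ k, HasDerivAt (fun t => ξ t k) (Ξf k) s := fun k => hHξ s k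
  -- derivative of the Hamiltonian velocity
  have hXd : ∀ k, HasDerivAt
      (fun t => 2 * τ * g0 (x t) k + 2 * ∑ j, g (x t) k j * ξ t j)
      (2 * τ * D0 k + 2 * ∑ j, (DG k j * q j + g p k j * Ξf j)) s := by
    intro k
    have h1 := (hg0d k).const_mul (2 * τ)
    have h2 : HasDerivAt (fun t => ∑ j, g (x t) k j * ξ t j)
        (∑ j, (DG k j * q j + g p k j * Ξf j)) s :=
      HasDerivAt.fun_sum fun j _ => (hgd k j).mul (hξd j)
    exact h1.add (h2.const_mul 2)
  -- first derivative of |x|²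
  have hf1 : deriv (fun s' => ∑ i, (x s' i) ^ 2)
      = fun t => ∑ i, 2 * (x t i *
          (2 * τ * g0 (x t) i + 2 * ∑ j, g (x t) i j * ξ t j)) := by
    funext t
    refine HasDerivAt.deriv (HasDerivAt.fun_sum fun i _ => ?_)
    have hx := hHx t i
    have e2 : 2 * (x t i * (2 * τ * g0 (x t) i + 2 * ∑ j, g (x t) i j * ξ t j))
        = (2 * τ * g0 (x t) i + 2 * ∑ j, g (x t) i j * ξ t j) * x t i
          + x t i * (2 * τ * g0 (x t) i + 2 * ∑ j, g (x t) i j * ξ t j) := by ring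
    rw [e2]
    simpa only [pow_two] using hx.fun_mul hx
  -- second derivative of |x|²
  have hsecond : HasDerivAt
      (fun t => ∑ i, 2 * (x t i *
          (2 * τ * g0 (x t) i + 2 * ∑ j, g (x t) i j * ξ t j)))
      (∑ i, 2 * (Xv i * Xv i
        + p i * (2 * τ * D0 i + 2 * ∑ j, (DG i j * q j + g p i j * Ξf j)))) s := by
    refine HasDerivAt.fun_sum fun i _ => ?_
    exact ((hHx s i).mul (hXd i)).const_mul 2
  have hdd : deriv (deriv fun s' => ∑ i, (x s' i) ^ 2) s
      = ∑ i, 2 * (Xv i * Xv i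
        + p i * (2 * τ * D0 i + 2 * ∑ j, (DG i j * q j + g p i j * Ξf j))) := by
    rw [hf1]
    exact hsecond.deriv
  -- pointwise smallness data
  obtain ⟨hG, hdG, hG0, hdG0⟩ := hAF p hrs
  have hpb : ∀ l, |p l| ≤ Real.sqrt (∑ i, (p i) ^ 2) := by
    intro l
    have h1 : (p l) ^ 2 ≤ ∑ i, (p i) ^ 2 :=
      Finset.single_le_sum (f := fun i => (p i) ^ 2) (fun i _ => sq_nonneg _)
        (Finset.mem_univ l)
    calc |p l| = Real.sqrt ((p l) ^ 2) := (Real.sqrt_sq_eq_abs _).symm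
      _ ≤ _ := Real.sqrt_le_sqrt h1
  have hpdG : ∀ l i j k, |p l * dg i j k| ≤ ε := by
    intro l i j k
    have h1 := hdG k i j
    rw [abs_mul]
    exact le_trans (mul_le_mul_of_nonneg_right (hpb l) (abs_nonneg _)) h1
  have hpdG0 : ∀ l j k, |p l * dg0 j k| ≤ ε := by
    intro l j k
    have h1 := hdG0 k j
    rw [abs_mul]
    exact le_trans (mul_le_mul_of_nonneg_right (hpb l) (abs_nonneg _)) h1
  obtain ⟨hSpos, hmain⟩ := estimate c₁ C₁ (1 + C₁) ε τ hc₁ hC₁ rfl hεdef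
    p q (g0 p) Xv Ξf D0 (g p) dg0 DG dg hG hG0 hpdG hpdG0
    (hell p q).1 (hell p q).2 (hnull s) hτ0
    (fun k => rfl) (fun k => rfl) (fun k j => rfl) (fun k => rfl)
  refine ⟨by rw [one_mul]; exact hSpos, ?_⟩
  rw [hdd, one_mul]
  have e3 : (1:ℝ) / 2 * ∑ i, 2 * (Xv i * Xv i
        + p i * (2 * τ * D0 i + 2 * ∑ j, (DG i j * q j + g p i j * Ξf j)))
      = ∑ k, Xv k * Xv k
        + ∑ k, p k * (2 * τ * D0 k + 2 * ∑ j, (DG k j * q j + g p k j * Ξf j)) := by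
    simp only [Fin.sum_univ_three]
    ring
  rw [e3]
  exact hmain
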